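/- Let f̂_1 and f̂_2 be kernel density estimators, with the same bandwidth σ, built from two independent i.i.d. samples of sizes n₁ and n₂ from the same density f. Then the expected two-sample discrepancy statistic satisfies E[∫_{ℝ^p} (f̂_1(x) − f̂_2(x))² dx] = (n₁⁻¹ + n₂⁻¹) ( σ^{-p} ∫ K² − ∫ (K_σ * f)² ). -/

import Mathlib

open MeasureTheory ProbabilityTheory Filter

/-- For kernel density estimators `f̂₁, f̂₂` with the same bandwidth `σ`, built from two
independent i.i.d. samples of sizes `n₁`, `n₂` from the same density `f`:
`E[∫ (f̂₁(x) − f̂₂(x))² dx] = (n₁⁻¹ + n₂⁻¹)(σ^{-p} ∫ K² − ∫ (K_σ * f)²)`. -/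
theorem two_sample_kernel_discrepancy_mean
    {Ω : Type*} [MeasurableSpace Ω] (P : Measure Ω) [IsProbabilityMeasure P]
    (p : ℕ) (K : (Fin p → ℝ) → ℝ)
    (hKmeas : Measurable K) (hKnonneg : ∀ x, 0 ≤ K x)
    (hKprob : ∫ x, K x = 1)
    (hKsq : Integrable (fun x => (K x) ^ 2))
    (f : (Fin p → ℝ) → ℝ) (hfmeas : Measurable f) (hfnonneg : ∀ x, 0 ≤ f x)
    (σ : ℝ) (hσ : 0 < σ)
    (Kσ : (Fin p → ℝ) → ℝ) (hKσ : ∀ x, Kσ x = (σ ^ p)⁻¹ * K (σ⁻¹ • x))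
    (conv : ((Fin p → ℝ) → ℝ) → ((Fin p → ℝ) → ℝ) → (Fin p → ℝ) → ℝ)
    (hconv : ∀ g h x, conv g h x = ∫ y, g (x - y) * h y)
    (hL2 : Integrable (fun x => (conv Kσ f x) ^ 2))
    (n₁ n₂ : ℕ) (hn₁ : 0 < n₁) (hn₂ : 0 < n₂)
    (X : Fin n₁ → Ω → (Fin p → ℝ)) (hXmeas : ∀ i, Measurable (X i))
    (Z : Fin n₂ → Ω → (Fin p → ℝ)) (hZmeas : ∀ i, Measurable (Z i))
    (hlawX : ∀ i, P.map (X i) = volume.withDensity (fun x => ENNReal.ofReal (f x)))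
    (hlawZ : ∀ i, P.map (Z i) = volume.withDensity (fun x => ENNReal.ofReal (f x)))
    (hindep : iIndepFun (Sum.elim X Z) P)
    (fhat₁ fhat₂ : Ω → (Fin p → ℝ) → ℝ)
    (hfhat₁ : ∀ ω x, fhat₁ ω x = ((n₁ : ℝ) * σ ^ p)⁻¹ * ∑ i, K (σ⁻¹ • (x - X i ω)))
    (hfhat₂ : ∀ ω x, fhat₂ ω x = ((n₂ : ℝ) * σ ^ p)⁻¹ * ∑ i, K (σ⁻¹ • (x - Z i ω))) :
    ∫ ω, (∫ x, (fhat₁ ω x - fhat₂ ω x) ^ 2) ∂P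
      = ((n₁ : ℝ)⁻¹ + (n₂ : ℝ)⁻¹)
        * ((σ ^ p)⁻¹ * (∫ x, (K x) ^ 2) - ∫ x, (conv Kσ f x) ^ 2) := by
  have hσp : (0:ℝ) < σ ^ p := pow_pos hσ p
  have hfrank : Module.finrank ℝ (Fin p → ℝ) = p := by
    simp [Module.finrank_fintype_fun_eq_card]
  -- K is integrable
  have hKint : Integrable K := by
    by_contra h
    rw [integral_undef h] at hKprob
    exact one_ne_zero hKprob.symm
  -- facts about κ := Kσ
  set κ : (Fin p → ℝ) → ℝ := Kσ with hκdef
  have hκmeas : Measurable κ := by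
    have : κ = fun x => (σ ^ p)⁻¹ * K (σ⁻¹ • x) := funext hKσ
    rw [this]
    exact (hKmeas.comp (measurable_const_smul σ⁻¹)).const_mul _
  have hκnn : ∀ x, 0 ≤ κ x := fun x => by
    rw [hKσ]; exact mul_nonneg (inv_nonneg.2 hσp.le) (hKnonneg _)
  have hκint : Integrable κ := by
    have h1 : Integrable (fun x => K (σ⁻¹ • x)) := by
      apply (integrable_comp_smul_iff volume K (inv_ne_zero hσ.ne')).2 hKint
    have : κ = fun x => (σ ^ p)⁻¹ * K (σ⁻¹ • x) := funext hKσ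
    rw [this]
    exact h1.const_mul _
  have hκ1 : ∫ x, κ x = 1 := by
    have : κ = fun x => (σ ^ p)⁻¹ * K (σ⁻¹ • x) := funext hKσ
    rw [this, integral_const_mul, Measure.integral_comp_inv_smul_of_nonneg volume K hσ.le, hfrank,
      smul_eq_mul, hKprob]
    field_simp
  have hκsqint : Integrable (fun x => κ x ^ 2) := by
    have h1 : Integrable (fun x => (K (σ⁻¹ • x)) ^ 2) := by
      apply (integrable_comp_smul_iff volume (fun x => (K x) ^ 2) (inv_ne_zero hσ.ne')).2 hKsq
    have : (fun x => κ x ^ 2) = fun x => ((σ ^ p)⁻¹) ^ 2 * (K (σ⁻¹ • x)) ^ 2 := by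
      funext x; rw [hKσ]; ring
    rw [this]
    exact h1.const_mul _
  have hκ2 : ∫ x, κ x ^ 2 = (σ ^ p)⁻¹ * ∫ x, (K x) ^ 2 := by
    have h0 : (fun x => κ x ^ 2) = fun x => ((σ ^ p)⁻¹) ^ 2 * (K (σ⁻¹ • x)) ^ 2 := by
      funext x; rw [hKσ]; ring
    rw [h0, integral_const_mul,
      Measure.integral_comp_inv_smul_of_nonneg volume (fun x => (K x) ^ 2) hσ.le, hfrank, smul_eq_mul]
    field_simp
  -- the law ν and W
  set ν : Measure (Fin p → ℝ) := volume.withDensity (fun x => ENNReal.ofReal (f x)) with hνdef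
  set W : Fin n₁ ⊕ Fin n₂ → Ω → (Fin p → ℝ) := Sum.elim X Z with hWdef
  have hWmeas : ∀ i, Measurable (W i) := by
    rintro (i | j)
    · exact hXmeas i
    · exact hZmeas j
  have hlawW : ∀ i, P.map (W i) = ν := by
    rintro (i | j)
    · exact hlawX i
    · exact hlawZ j
  have hνprob : IsProbabilityMeasure ν := by
    rw [← hlawW (Sum.inl ⟨0, hn₁⟩)]
    exact Measure.isProbabilityMeasure_map (hWmeas _).aemeasurable
  -- the kernel overlap function g
  set g : (Fin p → ℝ) → (Fin p → ℝ) → ℝ := fun y z => ∫ x, κ (x - y) * κ (x - z) with hgdef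
  have hshift : ∀ y : (Fin p → ℝ), Integrable (fun x => κ (x - y) ^ 2) := fun y =>
    hκsqint.comp_sub_right y
  have hshiftint : ∀ y : (Fin p → ℝ), ∫ x, κ (x - y) ^ 2 = ∫ x, κ x ^ 2 := fun y =>
    integral_sub_right_eq_self (fun x => κ x ^ 2) y
  have hgint : ∀ y z, Integrable (fun x => κ (x - y) * κ (x - z)) := by
    intro y z
    refine Integrable.mono' (((hshift y).add (hshift z)).const_mul (1/2)) ?_
      (ae_of_all _ fun x => ?_)
    · exact ((hκmeas.comp (measurable_sub_const y)).mul
        (hκmeas.comp (measurable_sub_const z))).aestronglyMeasurable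
    · rw [Real.norm_eq_abs, abs_of_nonneg (mul_nonneg (hκnn _) (hκnn _))]
      simp only [Pi.add_apply]
      nlinarith [sq_nonneg (κ (x - y) - κ (x - z)), hκnn (x - y), hκnn (x - z)]
  have hgnn : ∀ y z, 0 ≤ g y z := fun y z =>
    integral_nonneg fun x => mul_nonneg (hκnn _) (hκnn _)
  have hgle : ∀ y z, g y z ≤ ∫ x, κ x ^ 2 := by
    intro y z
    have h1 : g y z ≤ ∫ x, (1/2 : ℝ) * (κ (x - y) ^ 2 + κ (x - z) ^ 2) := by
      refine integral_mono (hgint y z) (((hshift y).add (hshift z)).const_mul (1/2))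
        fun x => ?_
      nlinarith [sq_nonneg (κ (x - y) - κ (x - z))]
    calc g y z ≤ ∫ x, (1/2 : ℝ) * (κ (x - y) ^ 2 + κ (x - z) ^ 2) := h1
      _ = (1/2) * ((∫ x, κ (x - y) ^ 2) + ∫ x, κ (x - z) ^ 2) := by
          rw [integral_const_mul, integral_add (hshift y) (hshift z)]
      _ = ∫ x, κ x ^ 2 := by rw [hshiftint y, hshiftint z]; ring
  have hgdiag : ∀ y, g y y = ∫ x, κ x ^ 2 := by
    intro y
    have : g y y = ∫ x, κ (x - y) ^ 2 := by
      simp only [hgdef, ← sq]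
    rw [this, hshiftint y]
  have hglin : ∀ y z, ENNReal.ofReal (g y z)
      = ∫⁻ x, ENNReal.ofReal (κ (x - y)) * ENNReal.ofReal (κ (x - z)) := by
    intro y z
    rw [ofReal_integral_eq_lintegral_ofReal (hgint y z)
      (ae_of_all _ fun x => mul_nonneg (hκnn _) (hκnn _))]
    congr 1
    funext x
    rw [ENNReal.ofReal_mul (hκnn _)]
  have hgmeas : Measurable (Function.uncurry g) := by
    have heq : Function.uncurry g = fun q : (Fin p → ℝ) × (Fin p → ℝ) =>
        (∫⁻ x, ENNReal.ofReal (κ (x - q.1)) * ENNReal.ofReal (κ (x - q.2))).toReal := by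
      funext q
      rw [← hglin q.1 q.2, ENNReal.toReal_ofReal (hgnn _ _)]
      rfl
    rw [heq]
    apply Measurable.ennreal_toReal
    apply Measurable.lintegral_prod_left
    refine Measurable.mul (f := fun q : (Fin p → ℝ) × ((Fin p → ℝ) × (Fin p → ℝ)) =>
      ENNReal.ofReal (κ (q.1 - q.2.1))) (g := fun q : (Fin p → ℝ) × ((Fin p → ℝ) × (Fin p → ℝ)) =>
      ENNReal.ofReal (κ (q.1 - q.2.2))) ?_ ?_
    · exact hκmeas.ennreal_ofReal.comp (measurable_fst.sub (measurable_fst.comp measurable_snd))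
    · exact hκmeas.ennreal_ofReal.comp (measurable_fst.sub (measurable_snd.comp measurable_snd))
  -- nonnegative valued machinery
  set k : (Fin p → ℝ) → ENNReal := fun x => ENNReal.ofReal (κ x) with hkdef
  set F : (Fin p → ℝ) → ENNReal := fun x => ENNReal.ofReal (f x) with hFdef
  have hkmeas : Measurable k := hκmeas.ennreal_ofReal
  have hFmeas : Measurable F := hfmeas.ennreal_ofReal
  have hkne : ∀ x, k x ≠ ⊤ := fun x => ENNReal.ofReal_ne_top
  have hFne : ∀ x, F x ≠ ⊤ := fun x => ENNReal.ofReal_ne_top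
  have hk1 : ∫⁻ x, k x = 1 := by
    rw [hkdef, ← ofReal_integral_eq_lintegral_ofReal hκint (ae_of_all _ hκnn), hκ1,
      ENNReal.ofReal_one]
  have hktrans : ∀ z, ∫⁻ x, k (x - z) = 1 := by
    intro z
    have : (fun x => k (x - z)) = fun x => k (x + -z) := by
      funext x; rw [sub_eq_add_neg]
    rw [this, lintegral_add_right_eq_self k (-z), hk1]
  have hF1 : ∫⁻ x, F x = 1 := by
    have := hνprob.measure_univ
    rw [hνdef, withDensity_apply _ MeasurableSet.univ, setLIntegral_univ] at this
    exact this
  set C : (Fin p → ℝ) → ENNReal := fun x => ∫⁻ z, k (x - z) * F z with hCdef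
  have hCmeas : Measurable C := by
    apply Measurable.lintegral_prod_right'
      (f := fun q : ((Fin p → ℝ)) × ((Fin p → ℝ)) => k (q.1 - q.2) * F q.2)
    exact (hkmeas.comp (measurable_fst.sub measurable_snd)).mul (hFmeas.comp measurable_snd)
  have hCint : ∫⁻ x, C x = 1 := by
    rw [hCdef]
    rw [lintegral_lintegral_swap (((hkmeas.comp (measurable_fst.sub measurable_snd)).mul
      (hFmeas.comp measurable_snd)).aemeasurable)]
    have : ∀ z, ∫⁻ x, k (x - z) * F z = F z := by
      intro z
      rw [lintegral_mul_const' (F z) _ (hFne z), hktrans z, one_mul]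
    simp_rw [this]
    exact hF1
  have hCae : ∀ᵐ x : (Fin p → ℝ), C x < ⊤ := by
    apply ae_lt_top hCmeas
    rw [hCint]; exact ENNReal.one_ne_top
  have hconvnn : ∀ x, 0 ≤ conv κ f x := by
    intro x
    rw [hconv]
    exact integral_nonneg fun y => mul_nonneg (hκnn _) (hfnonneg _)
  have hconvC : ∀ᵐ x : (Fin p → ℝ), ENNReal.ofReal (conv κ f x) = C x := by
    filter_upwards [hCae] with x hx
    have hmeq : (fun y => ENNReal.ofReal (κ (x - y) * f y)) = fun y => k (x - y) * F y := by
      funext y; rw [ENNReal.ofReal_mul (hκnn _)]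
    have hint : Integrable (fun y => κ (x - y) * f y) := by
      refine ⟨((hκmeas.comp (measurable_const.sub measurable_id)).mul
        hfmeas).aestronglyMeasurable, ?_⟩
      rw [hasFiniteIntegral_iff_ofReal (ae_of_all _ fun y => mul_nonneg (hκnn _) (hfnonneg _))]
      rw [show ∫⁻ y, ENNReal.ofReal (κ (x - y) * f y) = C x by rw [hCdef]; simp_rw [hmeq]]
      exact hx
    rw [hconv, ofReal_integral_eq_lintegral_ofReal hint
      (ae_of_all _ fun y => mul_nonneg (hκnn _) (hfnonneg _))]
    rw [hCdef]
    simp_rw [hmeq]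
  -- the key product-measure integral
  have hinner : ∀ y, ∫⁻ z, ENNReal.ofReal (g y z) ∂ν = ∫⁻ x, k (x - y) * C x := by
    intro y
    rw [hνdef, lintegral_withDensity_eq_lintegral_mul_non_measurable volume hFmeas
      (ae_of_all _ fun z => ENNReal.ofReal_lt_top)]
    simp only [Pi.mul_apply]
    calc ∫⁻ z, F z * ENNReal.ofReal (g y z)
        = ∫⁻ z, ∫⁻ x, (k (x - y) * k (x - z)) * F z := by
          refine lintegral_congr fun z => ?_
          rw [hglin y z, lintegral_mul_const' (F z) _ (hFne z), mul_comm]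
      _ = ∫⁻ x, ∫⁻ z, (k (x - y) * k (x - z)) * F z := by
          refine lintegral_lintegral_swap ?_
          apply Measurable.aemeasurable
          exact (((hkmeas.comp ((measurable_snd.sub measurable_const))).mul
            (hkmeas.comp (measurable_snd.sub measurable_fst))).mul
            (hFmeas.comp measurable_fst))
      _ = ∫⁻ x, k (x - y) * C x := by
          refine lintegral_congr fun x => ?_
          simp_rw [mul_assoc]
          rw [lintegral_const_mul' (k (x - y)) _ (hkne _)]
  have houter : ∫⁻ q, ENNReal.ofReal (Function.uncurry g q) ∂(ν.prod ν)
      = ∫⁻ x, C x * C x := by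
    rw [lintegral_prod _ hgmeas.ennreal_ofReal.aemeasurable]
    calc ∫⁻ y, (∫⁻ z, ENNReal.ofReal (Function.uncurry g (y, z)) ∂ν) ∂ν
        = ∫⁻ y, (∫⁻ x, k (x - y) * C x) ∂ν := lintegral_congr fun y => hinner y
      _ = ∫⁻ y, F y * ∫⁻ x, k (x - y) * C x := by
          rw [hνdef, lintegral_withDensity_eq_lintegral_mul_non_measurable volume hFmeas
            (ae_of_all _ fun z => ENNReal.ofReal_lt_top)]
          simp only [Pi.mul_apply]
      _ = ∫⁻ y, ∫⁻ x, (k (x - y) * C x) * F y := by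
          refine lintegral_congr fun y => ?_
          rw [lintegral_mul_const' (F y) _ (hFne y), mul_comm]
      _ = ∫⁻ x, ∫⁻ y, (k (x - y) * C x) * F y := by
          refine lintegral_lintegral_swap ?_
          apply Measurable.aemeasurable
          exact (((hkmeas.comp ((measurable_snd.sub measurable_fst))).mul
            (hCmeas.comp measurable_snd)).mul (hFmeas.comp measurable_fst))
      _ = ∫⁻ x, C x * C x := by
          refine lintegral_congr fun x => ?_
          have : ∀ y, (k (x - y) * C x) * F y = C x * (k (x - y) * F y) := by
            intro y; ring
          simp_rw [this]
          have hm : Measurable fun y : Fin p → ℝ => k (x - y) * F y :=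
            (hkmeas.comp (measurable_const.sub measurable_id)).mul hFmeas
          rw [lintegral_const_mul (C x) hm]
  have hCC : ∫⁻ x, C x * C x = ENNReal.ofReal (∫ x, (conv κ f x) ^ 2) := by
    have hae : ∀ᵐ x : (Fin p → ℝ), C x * C x = ENNReal.ofReal ((conv κ f x) ^ 2) := by
      filter_upwards [hconvC] with x hx
      rw [← hx, sq, ENNReal.ofReal_mul (hconvnn x)]
    rw [lintegral_congr_ae hae,
      ← ofReal_integral_eq_lintegral_ofReal hL2 (ae_of_all _ fun x => sq_nonneg _)]
  have hkey : ∫ q, Function.uncurry g q ∂(ν.prod ν) = ∫ x, (conv κ f x) ^ 2 := by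
    have hnn : 0 ≤ᵐ[ν.prod ν] Function.uncurry g :=
      ae_of_all _ fun q => hgnn q.1 q.2
    rw [integral_eq_lintegral_of_nonneg_ae hnn hgmeas.aestronglyMeasurable]
    rw [houter, hCC, ENNReal.toReal_ofReal (integral_nonneg fun x => sq_nonneg _)]
  -- per-pair expectations
  have hmemE : ∀ i j, Measurable fun ω => g (W i ω) (W j ω) := fun i j =>
    hgmeas.comp ((hWmeas i).prodMk (hWmeas j))
  have hEint : ∀ i j, Integrable (fun ω => g (W i ω) (W j ω)) P := by
    intro i j
    refine Integrable.mono' (integrable_const (∫ x, κ x ^ 2)) (hmemE i j).aestronglyMeasurable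
      (ae_of_all _ fun ω => ?_)
    rw [Real.norm_eq_abs, abs_of_nonneg (hgnn _ _)]
    exact hgle _ _
  have hEdiag : ∀ i, ∫ ω, g (W i ω) (W i ω) ∂P = ∫ x, κ x ^ 2 := by
    intro i
    simp only [hgdiag]
    simp
  have hEoff : ∀ i j, i ≠ j → ∫ ω, g (W i ω) (W j ω) ∂P = ∫ x, (conv κ f x) ^ 2 := by
    intro i j hij
    have hind : IndepFun (W i) (W j) P := hindep.indepFun hij
    have hmap : P.map (fun ω => (W i ω, W j ω)) = ν.prod ν := by
      rw [(indepFun_iff_map_prod_eq_prod_map_map (hWmeas i).aemeasurable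
        (hWmeas j).aemeasurable).mp hind, hlawW i, hlawW j]
    have h1 : ∫ ω, g (W i ω) (W j ω) ∂P
        = ∫ q, Function.uncurry g q ∂(P.map fun ω => (W i ω, W j ω)) := by
      rw [integral_map ((hWmeas i).prodMk (hWmeas j)).aemeasurable
        hgmeas.aestronglyMeasurable]
      rfl
    rw [h1, hmap, hkey]
  -- coefficients
  have hn₁' : (n₁ : ℝ) ≠ 0 := Nat.cast_ne_zero.2 hn₁.ne'
  have hn₂' : (n₂ : ℝ) ≠ 0 := Nat.cast_ne_zero.2 hn₂.ne'
  set a : Fin n₁ ⊕ Fin n₂ → ℝ := Sum.elim (fun _ => (n₁ : ℝ)⁻¹) (fun _ => -(n₂ : ℝ)⁻¹)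
    with hadef
  have hsum_a : ∑ i, a i = 0 := by
    rw [Fintype.sum_sum_type]
    simp only [hadef, Sum.elim_inl, Sum.elim_inr, Finset.sum_const, Finset.card_univ,
      Fintype.card_fin, nsmul_eq_mul]
    field_simp
    norm_num
  have hsum_a2 : ∑ i, a i ^ 2 = (n₁ : ℝ)⁻¹ + (n₂ : ℝ)⁻¹ := by
    rw [Fintype.sum_sum_type]
    simp only [hadef, Sum.elim_inl, Sum.elim_inr, Finset.sum_const, Finset.card_univ,
      Fintype.card_fin, nsmul_eq_mul]
    field_simp
  -- expanding the square of the difference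
  have hdiff : ∀ ω x, fhat₁ ω x - fhat₂ ω x = ∑ i, a i * κ (x - W i ω) := by
    intro ω x
    rw [Fintype.sum_sum_type]
    simp only [hadef, hWdef, Sum.elim_inl, Sum.elim_inr]
    rw [hfhat₁, hfhat₂, Finset.mul_sum, Finset.mul_sum]
    rw [sub_eq_add_neg, ← Finset.sum_neg_distrib]
    congr 1
    · refine Finset.sum_congr rfl fun i _ => ?_
      rw [hKσ, mul_inv]
      ring
    · refine Finset.sum_congr rfl fun i _ => ?_
      rw [hKσ, mul_inv]
      ring
  have hS1 : ∀ ω, (∫ x, (fhat₁ ω x - fhat₂ ω x) ^ 2)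
      = ∑ i, ∑ j, a i * a j * g (W i ω) (W j ω) := by
    intro ω
    have hexp : ∀ x : Fin p → ℝ, (fhat₁ ω x - fhat₂ ω x) ^ 2
        = ∑ i, ∑ j, (a i * a j) * (κ (x - W i ω) * κ (x - W j ω)) := by
      intro x
      rw [hdiff ω x, sq, Finset.sum_mul_sum]
      exact Finset.sum_congr rfl fun i _ => Finset.sum_congr rfl fun j _ => by ring
    simp_rw [hexp]
    rw [integral_finset_sum _ fun i _ =>
      integrable_finset_sum _ fun j _ => (hgint _ _).const_mul _]
    refine Finset.sum_congr rfl fun i _ => ?_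
    rw [integral_finset_sum _ fun j _ => (hgint _ _).const_mul _]
    refine Finset.sum_congr rfl fun j _ => ?_
    rw [integral_const_mul]
  -- putting everything together
  calc ∫ ω, (∫ x, (fhat₁ ω x - fhat₂ ω x) ^ 2) ∂P
      = ∫ ω, (∑ i, ∑ j, a i * a j * g (W i ω) (W j ω)) ∂P :=
        integral_congr_ae (ae_of_all _ hS1)
    _ = ∑ i, ∑ j, a i * a j * ∫ ω, g (W i ω) (W j ω) ∂P := by
        rw [integral_finset_sum _ fun i _ =>
          integrable_finset_sum _ fun j _ => (hEint _ _).const_mul _]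
        refine Finset.sum_congr rfl fun i _ => ?_
        rw [integral_finset_sum _ fun j _ => (hEint _ _).const_mul _]
        refine Finset.sum_congr rfl fun j _ => ?_
        rw [integral_const_mul]
    _ = ∑ i, a i ^ 2 * ((∫ x, κ x ^ 2) - ∫ x, (conv κ f x) ^ 2) := by
        refine Finset.sum_congr rfl fun i _ => ?_
        have hterm : ∀ j, a i * a j * ∫ ω, g (W i ω) (W j ω) ∂P
            = a i * a j * (∫ x, (conv κ f x) ^ 2)
              + (if j = i then a i ^ 2 * ((∫ x, κ x ^ 2) - ∫ x, (conv κ f x) ^ 2) else 0) := by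
          intro j
          by_cases h : j = i
          · subst h
            rw [hEdiag j, if_pos rfl]
            ring
          · rw [hEoff i j (fun hh => h hh.symm), if_neg h]
            ring
        simp_rw [hterm]
        rw [Finset.sum_add_distrib]
        simp only [Finset.sum_ite_eq, Finset.sum_ite_eq', Finset.mem_univ, if_true]
        have h2 : ∑ j, a i * a j * (∫ x, (conv κ f x) ^ 2)
            = a i * (∑ j, a j) * (∫ x, (conv κ f x) ^ 2) := by
          simp_rw [mul_assoc]
          rw [← Finset.mul_sum, ← Finset.sum_mul]
        rw [h2, hsum_a]
        ring
    _ = (∑ i, a i ^ 2) * ((∫ x, κ x ^ 2) - ∫ x, (conv κ f x) ^ 2) := by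
        rw [← Finset.sum_mul]
    _ = ((n₁ : ℝ)⁻¹ + (n₂ : ℝ)⁻¹)
        * ((σ ^ p)⁻¹ * (∫ x, (K x) ^ 2) - ∫ x, (conv κ f x) ^ 2) := by
        rw [hsum_a2, hκ2]
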